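/- Let S be a semigroup, μ a nonzero multiplicative function on S, A an additive function on S∖I_μ, and T a subsemigroup of S. If Ψ_μ(A)(x) = Σ_{j=1}^N c_j χ_j(x) for all x ∈ T, where c_j ∈ ℂ and χ₁,…,χ_N are multiplicative functions on T, then Ψ_μ(A)(x) = 0 for all x ∈ T. -/

import Mathlib

open scoped BigOperators

variable {S : Type*}

/-- A multiplicative function on a semigroup `S`. -/
def IsMultiplicativeFn [Semigroup S] (χ : S → ℂ) : Prop :=
  ∀ x y, χ (x * y) = χ x * χ y

/-- An additive function on a semigroup `S`. -/
def IsAdditiveFn [Semigroup S] (a : S → ℂ) : Prop :=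
  ∀ x y, a (x * y) = a x + a y

/-- A function additive on a subset `T` of `S`. -/
def IsAdditiveOnSet [Semigroup S] (a : S → ℂ) (T : Set S) : Prop :=
  ∀ x ∈ T, ∀ y ∈ T, a (x * y) = a x + a y

/-- A function multiplicative on a subset `T` of `S`. -/
def IsMultiplicativeOnSet [Semigroup S] (χ : S → ℂ) (T : Set S) : Prop :=
  ∀ x ∈ T, ∀ y ∈ T, χ (x * y) = χ x * χ y

/-- `Ψ_χ(φ) (x) = χ(x) φ(x)` for `x ∉ I_χ` and `0` on `I_χ = {x | χ x = 0}`.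
Functions on `S ∖ I_χ` are represented as functions on `S` whose values
off `{x | χ x ≠ 0}` are irrelevant. -/
noncomputable def PsiFn [Semigroup S] (χ φ : S → ℂ) : S → ℂ :=
  fun x => if χ x = 0 then 0 else χ x * φ x

/-- `S` is generated by its squares. -/
def SquareGenerated (S : Type*) [Semigroup S] : Prop :=
  ∀ x : S, x ∈ Subsemigroup.closure {y : S | ∃ z : S, y = z * z}


/-- Key sequence lemma: if a linear combination of geometric sequences with ratios
avoiding `m` equals `n ↦ n m^(n-1) b + m^n d` for all `n ≥ 1`, then `b = d = 0`. -/
lemma seq_lemma (m : ℂ) (hm : m ≠ 0) :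
    ∀ (s : Finset ℂ), m ∉ s → ∀ (c : ℂ → ℂ) (b d : ℂ),
      (∀ n : ℕ, 1 ≤ n → ∑ r ∈ s, c r * r ^ n = n * m ^ (n - 1) * b + m ^ n * d) →
      b = 0 ∧ d = 0 := by
  intro s
  induction s using Finset.induction_on with
  | empty =>
      intro _ c b d h
      have h1 := h 1 le_rfl
      have h2 := h 2 (by norm_num)
      simp at h1 h2
      have e1 : b + m * d = 0 := by linear_combination -h1
      have e2 : 2 * m * b + m ^ 2 * d = 0 := by
        push_cast at h2; linear_combination -h2
      have hb : m * b = 0 := by linear_combination e2 - m * e1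
      have hb0 : b = 0 := (mul_eq_zero.mp hb).resolve_left hm
      refine ⟨hb0, ?_⟩
      have hmd : m * d = 0 := by rw [hb0, zero_add] at e1; exact e1
      exact (mul_eq_zero.mp hmd).resolve_left hm
  | @insert a t hat ih =>
      intro hms c b d h
      have hma : m ≠ a := fun e => hms (e ▸ Finset.mem_insert_self a t)
      have hmt : m ∉ t := fun e => hms (Finset.mem_insert_of_mem e)
      have key : ∀ n : ℕ, 1 ≤ n →
          ∑ r ∈ t, (c r * (r - a)) * r ^ n
            = n * m ^ (n - 1) * ((m - a) * b) + m ^ n * (b + (m - a) * d) := by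
        intro n hn
        obtain ⟨k, rfl⟩ : ∃ k, n = k + 1 := ⟨n - 1, by omega⟩
        have h1 := h (k + 1) hn
        have h2 := h (k + 2) (by omega)
        rw [Finset.sum_insert hat] at h1 h2
        simp only [Nat.add_sub_cancel] at h1 h2 ⊢
        have h2' : (k : ℂ) + 2 = (k + 1) + 1 := by push_cast; ring
        push_cast at h1 h2 ⊢
        have hsum : ∑ r ∈ t, (c r * (r - a)) * r ^ (k + 1)
            = (∑ r ∈ t, c r * r ^ (k + 2)) - a * (∑ r ∈ t, c r * r ^ (k + 1)) := by
          rw [Finset.mul_sum, ← Finset.sum_sub_distrib]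
          refine Finset.sum_congr rfl fun r _ => by ring
        rw [hsum]
        have e2 : ∑ r ∈ t, c r * r ^ (k + 2)
            = ((k : ℂ) + 2) * m ^ (k + 1) * b + m ^ (k + 2) * d - c a * a ^ (k + 2) := by
          linear_combination h2
        have e1 : ∑ r ∈ t, c r * r ^ (k + 1)
            = ((k : ℂ) + 1) * m ^ k * b + m ^ (k + 1) * d - c a * a ^ (k + 1) := by
          linear_combination h1
        rw [e1, e2]
        ring
      obtain ⟨hb', hd'⟩ := ih hmt (fun r => c r * (r - a)) _ _ key
      have hma' : m - a ≠ 0 := sub_ne_zero.mpr hma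
      have hb : b = 0 := (mul_eq_zero.mp hb').resolve_left hma'
      refine ⟨hb, ?_⟩
      rw [hb, zero_add] at hd'
      exact (mul_eq_zero.mp hd').resolve_left hma'

/-- Version allowing `m` among the ratios (no extra geometric term). -/
lemma seq_lemma' (m : ℂ) (hm : m ≠ 0) (s : Finset ℂ) (c : ℂ → ℂ) (b : ℂ)
    (h : ∀ n : ℕ, 1 ≤ n → ∑ r ∈ s, c r * r ^ n = n * m ^ (n - 1) * b) :
    b = 0 := by
  by_cases hms : m ∈ s
  · have h' : ∀ n : ℕ, 1 ≤ n →
        ∑ r ∈ s.erase m, c r * r ^ n = n * m ^ (n - 1) * b + m ^ n * (-(c m)) := by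
      intro n hn
      have := Finset.add_sum_erase s (fun r => c r * r ^ n) hms
      have h0 := h n hn
      rw [← this] at h0
      linear_combination h0
    exact (seq_lemma m hm (s.erase m) (Finset.notMem_erase m s) c b (-(c m)) h').1
  · have h' : ∀ n : ℕ, 1 ≤ n →
        ∑ r ∈ s, c r * r ^ n = n * m ^ (n - 1) * b + m ^ n * 0 := by
      intro n hn; rw [mul_zero, add_zero]; exact h n hn
    exact (seq_lemma m hm s hms c b 0 h').1

/-- `powAux x n = x^(n+1)` in a semigroup. -/
def powAux {S : Type*} [Semigroup S] (x : S) : ℕ → S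
  | 0 => x
  | n + 1 => powAux x n * x


/-- If `Ψ_μ(A)` agrees on a subsemigroup `T` with a linear
combination of multiplicative functions on `T`, then `Ψ_μ(A) = 0` on `T`. -/
theorem stmt4 [Semigroup S] (μ : S → ℂ)
    (hμ : IsMultiplicativeFn μ) (hμ0 : μ ≠ 0)
    (A : S → ℂ) (hA : IsAdditiveOnSet A {x : S | μ x ≠ 0})
    (T : Subsemigroup S) (N : ℕ) (c : Fin N → ℂ) (χ : Fin N → S → ℂ)
    (hχ : ∀ j, IsMultiplicativeOnSet (χ j) (T : Set S))
    (h : ∀ x ∈ T, PsiFn μ A x = ∑ j, c j * χ j x) :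
    ∀ x ∈ T, PsiFn μ A x = 0 := by
  intro x hx
  by_cases hx0 : μ x = 0
  · simp [PsiFn, hx0]
  · set m := μ x with hm
    -- basic facts about powers of x
    have hpT : ∀ n, powAux x n ∈ T := by
      intro n; induction n with
      | zero => exact hx
      | succ k ihk => exact T.mul_mem ihk hx
    have hpμ : ∀ n, μ (powAux x n) = m ^ (n + 1) := by
      intro n; induction n with
      | zero => simp [powAux]; rfl
      | succ k ihk => rw [powAux, hμ, ihk]; ring
    have hpμ0 : ∀ n, μ (powAux x n) ≠ 0 := by
      intro n; rw [hpμ]; exact pow_ne_zero _ hx0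
    have hpχ : ∀ j n, χ j (powAux x n) = (χ j x) ^ (n + 1) := by
      intro j n; induction n with
      | zero => simp [powAux]
      | succ k ihk => rw [powAux, hχ j _ (hpT k) x hx, ihk]; ring
    have hpA : ∀ n, A (powAux x n) = (n + 1 : ℕ) * A x := by
      intro n; induction n with
      | zero => simp [powAux]
      | succ k ihk =>
          rw [powAux, hA _ (hpμ0 k) x hx0, ihk]
          push_cast; ring
    -- the power identity
    have key : ∀ n : ℕ, 1 ≤ n →
        ∑ j, c j * (χ j x) ^ n = n * m ^ (n - 1) * (m * A x) := by
      intro n hn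
      obtain ⟨k, rfl⟩ : ∃ k, n = k + 1 := ⟨n - 1, by omega⟩
      have h1 := h (powAux x k) (hpT k)
      rw [show PsiFn μ A (powAux x k) = μ (powAux x k) * A (powAux x k) from if_neg (hpμ0 k)] at h1
      rw [hpμ k, hpA k] at h1
      simp only [hpχ] at h1
      simp only [Nat.add_sub_cancel]
      push_cast
      rw [← h1]; push_cast; ring
    -- regroup the sum by the distinct values of χ j x
    classical
    set s : Finset ℂ := Finset.image (fun j => χ j x) Finset.univ with hs
    set c' : ℂ → ℂ := fun r => ∑ j ∈ Finset.univ.filter (fun j => χ j x = r), c j with hc'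
    have hgroup : ∀ n : ℕ, ∑ r ∈ s, c' r * r ^ n = ∑ j, c j * (χ j x) ^ n := by
      intro n
      rw [← Finset.sum_fiberwise_of_maps_to (g := fun j => χ j x)
        (fun i _ => Finset.mem_image_of_mem _ (Finset.mem_univ i))
        (fun j => c j * (χ j x) ^ n)]
      refine Finset.sum_congr rfl fun r _ => ?_
      rw [hc', Finset.sum_mul]
      refine Finset.sum_congr rfl fun j hj => ?_
      rw [(Finset.mem_filter.mp hj).2]
    have hb : m * A x = 0 := by
      refine seq_lemma' m hx0 s c' (m * A x) ?_
      intro n hn; rw [hgroup]; exact key n hn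
    rw [show PsiFn μ A x = μ x * A x from if_neg hx0]
    rw [← hm]
    exact hb
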